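/- Let R and B be disjoint finite sets of points in the plane with |R| = |B| = n ≥ 2, and let E be a max-sum bichromatic matching of R and B. Then every pair of disks induced by the matching intersect: for any two pairs (a,a') and (b,b') in E (with a,b ∈ R and a',b' ∈ B), the disks D_{aa'} and D_{bb'} have a common point. -/

import Mathlib

noncomputable section

/-- Points of the plane with the Euclidean norm. -/
abbrev Pt : Type := EuclideanSpace ℝ (Fin 2)

/-- The closed disk with diameter the segment `pq`: center `(p+q)/2`, radius `‖p-q‖/2`. -/
def disk (p q : Pt) : Set Pt := Metric.closedBall (midpoint ℝ p q) (dist p q / 2)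


/-- Total Euclidean length of the bichromatic matching that matches `p ∈ R` with `f p`. -/
def bmCost (R : Finset Pt) (f : Pt → Pt) : ℝ := ∑ p ∈ R, dist p (f p)

/-- `f` is a max-sum bichromatic matching of `R` and `B`: it is a bijection from `R` onto `B`
maximizing the total Euclidean distance of matched pairs. -/
def IsMaxSumBichromatic (R B : Finset Pt) (f : Pt → Pt) : Prop :=
  Set.BijOn f ↑R ↑B ∧ ∀ g : Pt → Pt, Set.BijOn g ↑R ↑B → bmCost R g ≤ bmCost R f

/-- Two closed balls with `dist x y ≤ r + s` intersect. -/
lemma balls_inter {x y : Pt} {r s : ℝ} (hr : 0 ≤ r) (hs : 0 ≤ s)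
    (h : dist x y ≤ r + s) :
    (Metric.closedBall x r ∩ Metric.closedBall y s).Nonempty := by
  rcases eq_or_lt_of_le (by positivity : (0:ℝ) ≤ r + s) with h0 | h0
  · refine ⟨x, Metric.mem_closedBall_self hr, ?_⟩
    rw [Metric.mem_closedBall, dist_comm]
    have := dist_comm x y
    linarith
  · set t : ℝ := r / (r + s) with ht
    have ht0 : 0 ≤ t := by positivity
    have ht1 : t ≤ 1 := by
      rw [ht, div_le_one h0]; linarith
    refine ⟨x + t • (y - x), ?_, ?_⟩
    · rw [Metric.mem_closedBall, dist_eq_norm]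
      have : x + t • (y - x) - x = t • (y - x) := by abel
      rw [this, norm_smul]
      simp only [Real.norm_eq_abs, abs_of_nonneg ht0]
      have hxy : ‖y - x‖ ≤ r + s := by rwa [← dist_eq_norm, dist_comm]
      calc t * ‖y - x‖ ≤ t * (r + s) := by nlinarith
        _ = r := by rw [ht]; field_simp
    · rw [Metric.mem_closedBall, dist_eq_norm]
      have : x + t • (y - x) - y = (1 - t) • (x - y) := by
        simp [sub_smul, smul_sub]; abel
      rw [this, norm_smul]
      simp only [Real.norm_eq_abs, abs_of_nonneg (by linarith : (0:ℝ) ≤ 1 - t)]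
      have hxy : ‖x - y‖ ≤ r + s := by rwa [← dist_eq_norm]
      have h1t : 1 - t = s / (r + s) := by rw [ht]; field_simp; ring
      calc (1 - t) * ‖x - y‖ ≤ (1 - t) * (r + s) := by nlinarith
        _ = s := by rw [h1t]; field_simp

/-- Every pair of disks induced by a max-sum bichromatic matching intersect. -/
theorem stmt0 (n : ℕ) (hn : 2 ≤ n) (R B : Finset Pt) (hdisj : Disjoint R B)
    (hR : R.card = n) (hB : B.card = n) (f : Pt → Pt)
    (hf : IsMaxSumBichromatic R B f)
    (a b : Pt) (ha : a ∈ R) (hb : b ∈ R) (hab : a ≠ b) :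
    (disk a (f a) ∩ disk b (f b)).Nonempty := by
  classical
  by_contra hne
  -- disks disjoint ⟹ centers far apart
  have hfar : dist (f a) a / 2 + dist (f b) b / 2 <
      dist (midpoint ℝ a (f a)) (midpoint ℝ b (f b)) := by
    by_contra hle
    push_neg at hle
    apply hne
    have := balls_inter (x := midpoint ℝ a (f a)) (y := midpoint ℝ b (f b))
      (r := dist a (f a) / 2) (s := dist b (f b) / 2)
      (by positivity) (by positivity)
      (by have h1 := dist_comm a (f a); have h2 := dist_comm b (f b); linarith)
    exact this
  -- key metric inequality
  have hmid : dist (midpoint ℝ a (f a)) (midpoint ℝ b (f b)) ≤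
      (dist a (f b) + dist (f a) b) / 2 := by
    have := dist_midpoint_midpoint_le (V := Pt) a (f a) (f b) b
    rwa [midpoint_comm (f b) b] at this
  have hkey : dist a (f a) + dist b (f b) < dist a (f b) + dist b (f a) := by
    have h1 : dist (f a) a = dist a (f a) := dist_comm _ _
    have h2 : dist (f b) b = dist b (f b) := dist_comm _ _
    have h3 : dist (f a) b = dist b (f a) := dist_comm _ _
    linarith
  -- swapped matching
  set g : Pt → Pt := f ∘ Equiv.swap a b with hg
  have hswap : Set.BijOn (Equiv.swap a b) ↑R ↑R := by
    refine ⟨fun p hp => ?_, (Equiv.injective _).injOn, fun q hq => ?_⟩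
    · rcases eq_or_ne p a with rfl | hpa
      · simpa [Equiv.swap_apply_left] using hb
      rcases eq_or_ne p b with rfl | hpb
      · simpa [Equiv.swap_apply_right] using ha
      · simpa [Equiv.swap_apply_of_ne_of_ne hpa hpb] using hp
    · refine ⟨Equiv.swap a b q, ?_, by simp⟩
      rcases eq_or_ne q a with rfl | hpa
      · simpa [Equiv.swap_apply_left] using hb
      rcases eq_or_ne q b with rfl | hpb
      · simpa [Equiv.swap_apply_right] using ha
      · simpa [Equiv.swap_apply_of_ne_of_ne hpa hpb] using hq
  have hgbij : Set.BijOn g ↑R ↑B := hf.1.comp hswap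
  -- cost comparison
  have hcost : bmCost R f < bmCost R g := by
    have hb' : b ∈ R.erase a := Finset.mem_erase.mpr ⟨hab.symm, hb⟩
    have hsplit : ∀ F : Pt → ℝ, ∑ p ∈ R, F p =
        F a + (F b + ∑ p ∈ (R.erase a).erase b, F p) := by
      intro F
      rw [← Finset.add_sum_erase _ F ha, ← Finset.add_sum_erase _ F hb']
    have htail : ∀ p ∈ (R.erase a).erase b,
        dist p (g p) = dist p (f p) := by
      intro p hp
      have hpb : p ≠ b := (Finset.mem_erase.mp hp).1
      have hpa : p ≠ a := (Finset.mem_erase.mp (Finset.mem_erase.mp hp).2).1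
      simp [hg, Equiv.swap_apply_of_ne_of_ne hpa hpb]
    unfold bmCost
    rw [hsplit (fun p => dist p (f p)), hsplit (fun p => dist p (g p)),
      Finset.sum_congr rfl htail]
    have hga : g a = f b := by simp [hg]
    have hgb : g b = f a := by simp [hg]
    rw [hga, hgb]
    linarith
  exact absurd (hf.2 g hgbij) (not_le.mpr hcost)
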